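/- Fix a constant b > 0 with b ≠ 1 and let ε(α) → 0 as α → 0⁺. Suppose ζ = α(1 − δ) with δ = b√α/e, and c = (2 ln(1/α) + 2 − ε(α))/α. Then ψ′(ζ) = c(ζ−α²)/(1−α)⁴ + 2 ln(α−ζ) − ln ζ − ln(1−2α+ζ) converges to 2 ln b as α → 0⁺; in particular it is negative for sufficiently small α if b < 1, and positive if b > 1. -/

import Mathlib

open Filter

section PsiAux
open Real

private lemma psi_limit (b : ℝ) (hb : 0 < b) (ε : ℝ → ℝ)
    (hε : Tendsto ε (nhdsWithin 0 (Set.Ioi 0)) (nhds 0)) :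
    Tendsto (fun α : ℝ =>
        ((2 * Real.log (1 / α) + 2 - ε α) / α) *
            (α * (1 - b * Real.sqrt α / Real.exp 1) - α ^ 2) / (1 - α) ^ 4 +
          2 * Real.log (α - α * (1 - b * Real.sqrt α / Real.exp 1)) -
          Real.log (α * (1 - b * Real.sqrt α / Real.exp 1)) -
          Real.log (1 - 2 * α + α * (1 - b * Real.sqrt α / Real.exp 1)))
      (nhdsWithin 0 (Set.Ioi 0)) (nhds (2 * Real.log b)) := by
  set G : ℝ → ℝ := fun α =>
    (Real.log α * Real.sqrt α) *
        ((2*(b/Real.exp 1) - 2*Real.sqrt α*(3 - 6*α + 4*α^2 - α^3))/(1-α)^4)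
      + (2 - ε α)*((1 - b*Real.sqrt α/Real.exp 1 - α)/(1-α)^4)
      + (2*Real.log b - 2)
      - Real.log (1 - b*Real.sqrt α/Real.exp 1)
      - Real.log (1 - α - α*(b*Real.sqrt α/Real.exp 1)) with hG
  have hid : Tendsto (fun α : ℝ => α) (nhdsWithin 0 (Set.Ioi 0)) (nhds 0) :=
    tendsto_id.mono_right nhdsWithin_le_nhds
  have hsq : Tendsto (fun α : ℝ => Real.sqrt α) (nhdsWithin 0 (Set.Ioi 0)) (nhds 0) := by
    have := (Real.continuous_sqrt.tendsto 0).comp hid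
    simpa using! this
  have hls : Tendsto (fun α : ℝ => Real.log α * Real.sqrt α)
      (nhdsWithin 0 (Set.Ioi 0)) (nhds 0) := by
    have h := tendsto_log_mul_rpow_nhdsGT_zero (r := 1/2) (by norm_num)
    refine h.congr fun x => ?_
    rw [Real.sqrt_eq_rpow]
  have hGlim : Tendsto G (nhdsWithin 0 (Set.Ioi 0)) (nhds (2 * Real.log b)) := by
    rw [hG]
    have h1 : Tendsto (fun α : ℝ =>
        (Real.log α * Real.sqrt α) *
          ((2*(b/Real.exp 1) - 2*Real.sqrt α*(3 - 6*α + 4*α^2 - α^3))/(1-α)^4))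
        (nhdsWithin 0 (Set.Ioi 0)) (nhds 0) := by
      have hfac : Tendsto (fun α : ℝ =>
          (2*(b/Real.exp 1) - 2*Real.sqrt α*(3 - 6*α + 4*α^2 - α^3))/(1-α)^4)
          (nhdsWithin 0 (Set.Ioi 0))
          (nhds ((2*(b/Real.exp 1) - 2*0*(3 - 6*0 + 4*0^2 - 0^3))/(1-0)^4)) := by
        refine Tendsto.div ?_ ((tendsto_const_nhds.sub hid).pow 4) (by norm_num)
        exact tendsto_const_nhds.sub ((tendsto_const_nhds.mul hsq).mul
          (((tendsto_const_nhds.sub (tendsto_const_nhds.mul hid)).add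
            (tendsto_const_nhds.mul (hid.pow 2))).sub (hid.pow 3)))
      have := hls.mul hfac
      simpa using this
    have h2 : Tendsto (fun α : ℝ =>
        (2 - ε α)*((1 - b*Real.sqrt α/Real.exp 1 - α)/(1-α)^4))
        (nhdsWithin 0 (Set.Ioi 0)) (nhds 2) := by
      have hfac : Tendsto (fun α : ℝ => (1 - b*Real.sqrt α/Real.exp 1 - α)/(1-α)^4)
          (nhdsWithin 0 (Set.Ioi 0))
          (nhds ((1 - b*0/Real.exp 1 - 0)/(1-0)^4)) := by
        refine Tendsto.div ?_ ((tendsto_const_nhds.sub hid).pow 4) (by norm_num)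
        exact (tendsto_const_nhds.sub ((tendsto_const_nhds.mul hsq).div_const _)).sub hid
      have h2' := ((tendsto_const_nhds : Tendsto (fun _ : ℝ => (2:ℝ)) (nhdsWithin 0 (Set.Ioi 0)) (nhds 2)).sub hε).mul hfac
      norm_num at h2'
      simpa using h2'
    have h3 : Tendsto (fun α : ℝ => Real.log (1 - b*Real.sqrt α/Real.exp 1))
        (nhdsWithin 0 (Set.Ioi 0)) (nhds 0) := by
      have hinner : Tendsto (fun α : ℝ => 1 - b*Real.sqrt α/Real.exp 1)
          (nhdsWithin 0 (Set.Ioi 0)) (nhds 1) := by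
        have h' : Tendsto (fun α : ℝ => 1 - b*Real.sqrt α/Real.exp 1)
            (nhdsWithin 0 (Set.Ioi 0)) (nhds (1 - b*0/Real.exp 1)) :=
          tendsto_const_nhds.sub ((tendsto_const_nhds.mul hsq).div_const (Real.exp 1))
        simpa using h'
      have := ((Real.continuousAt_log (by norm_num : (1:ℝ) ≠ 0)).tendsto).comp hinner
      simpa using! this
    have h4 : Tendsto (fun α : ℝ => Real.log (1 - α - α*(b*Real.sqrt α/Real.exp 1)))
        (nhdsWithin 0 (Set.Ioi 0)) (nhds 0) := by
      have hinner : Tendsto (fun α : ℝ => 1 - α - α*(b*Real.sqrt α/Real.exp 1))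
          (nhdsWithin 0 (Set.Ioi 0)) (nhds 1) := by
        have h' : Tendsto (fun α : ℝ => 1 - α - α*(b*Real.sqrt α/Real.exp 1))
            (nhdsWithin 0 (Set.Ioi 0)) (nhds (1 - 0 - 0*(b*0/Real.exp 1))) :=
          (tendsto_const_nhds.sub hid).sub
            (hid.mul ((tendsto_const_nhds.mul hsq).div_const (Real.exp 1)))
        simpa using h'
      have := ((Real.continuousAt_log (by norm_num : (1:ℝ) ≠ 0)).tendsto).comp hinner
      simpa using! this
    have hcomb : Tendsto (fun α : ℝ =>
        (Real.log α * Real.sqrt α) *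
            ((2*(b/Real.exp 1) - 2*Real.sqrt α*(3 - 6*α + 4*α^2 - α^3))/(1-α)^4)
          + (2 - ε α)*((1 - b*Real.sqrt α/Real.exp 1 - α)/(1-α)^4)
          + (2*Real.log b - 2)
          - Real.log (1 - b*Real.sqrt α/Real.exp 1)
          - Real.log (1 - α - α*(b*Real.sqrt α/Real.exp 1)))
        (nhdsWithin 0 (Set.Ioi 0)) (nhds (0 + 2 + (2*Real.log b - 2) - 0 - 0)) :=
      (((h1.add h2).add tendsto_const_nhds).sub h3).sub h4
    convert hcomb using 2
    ring
  refine hGlim.congr' ?_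
  have hmem : Set.Ioo (0:ℝ) (min 1 ((Real.exp 1 / b)^2)) ∈ nhdsWithin (0:ℝ) (Set.Ioi 0) :=
    Ioo_mem_nhdsGT_of_mem ⟨le_refl 0, lt_min one_pos (by positivity)⟩
  filter_upwards [hmem] with α hα
  obtain ⟨h0, hlt⟩ := hα
  have hα1 : α < 1 := lt_of_lt_of_le hlt (min_le_left _ _)
  have hαe : α < (Real.exp 1 / b)^2 := lt_of_lt_of_le hlt (min_le_right _ _)
  have hs0 : 0 < Real.sqrt α := Real.sqrt_pos.2 h0
  have hsb : Real.sqrt α < Real.exp 1 / b := by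
    have h' : Real.sqrt ((Real.exp 1 / b)^2) = Real.exp 1 / b :=
      Real.sqrt_sq (by positivity)
    have h2 : Real.sqrt α < Real.sqrt ((Real.exp 1 / b)^2) := by
      apply Real.sqrt_lt_sqrt h0.le hαe
    rwa [h'] at h2
  have hd : b * Real.sqrt α / Real.exp 1 < 1 := by
    rw [div_lt_one (Real.exp_pos 1)]
    have := (mul_lt_mul_iff_right₀ hb).2 hsb
    rwa [mul_div_cancel₀ _ hb.ne'] at this
  have h1d : 0 < 1 - b * Real.sqrt α / Real.exp 1 := sub_pos.2 hd
  have e1 : Real.log (1/α) = -Real.log α := by rw [one_div, Real.log_inv]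
  have e2 : Real.log (α - α*(1 - b*Real.sqrt α/Real.exp 1))
      = Real.log α + Real.log b + Real.log α / 2 - 1 := by
    have hrw : α - α*(1 - b*Real.sqrt α/Real.exp 1) = α * b * Real.sqrt α / Real.exp 1 := by
      ring
    rw [hrw, Real.log_div (by positivity) (Real.exp_ne_zero 1),
      Real.log_mul (by positivity) hs0.ne', Real.log_mul h0.ne' hb.ne',
      Real.log_sqrt h0.le, Real.log_exp]
  have e3 : Real.log (α*(1 - b*Real.sqrt α/Real.exp 1))
      = Real.log α + Real.log (1 - b*Real.sqrt α/Real.exp 1) :=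
    Real.log_mul h0.ne' h1d.ne'
  have e4 : 1 - 2*α + α*(1 - b*Real.sqrt α/Real.exp 1)
      = 1 - α - α*(b*Real.sqrt α/Real.exp 1) := by ring
  simp only [hG]
  rw [e1, e2, e3, e4]
  have hss : Real.sqrt α * Real.sqrt α = α := Real.mul_self_sqrt h0.le
  set s := Real.sqrt α with hsdef
  have h1ne : (1:ℝ) - α ≠ 0 := by
    intro h; nlinarith
  rw [← hss]
  have h1ne' : (1:ℝ) - s * s ≠ 0 := by rwa [hss]
  have h1ne'' : (1:ℝ) - s ^ 2 ≠ 0 := by rwa [sq]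
  field_simp
  ring

end PsiAux

/-- With `ζ = α(1 - b√α/e)`, `c = (2 ln(1/α) + 2 - ε(α))/α` where `ε(α) → 0`,
the expression `ψ′(ζ)` converges to `2 ln b` as `α → 0⁺`; in particular it is
eventually negative if `b < 1` and eventually positive if `b > 1`. -/
theorem psi_first_deriv_limit (b : ℝ) (hb : 0 < b) (hb1 : b ≠ 1) (ε : ℝ → ℝ)
    (hε : Tendsto ε (nhdsWithin 0 (Set.Ioi 0)) (nhds 0)) :
    Tendsto (fun α : ℝ =>
        ((2 * Real.log (1 / α) + 2 - ε α) / α) *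
            (α * (1 - b * Real.sqrt α / Real.exp 1) - α ^ 2) / (1 - α) ^ 4 +
          2 * Real.log (α - α * (1 - b * Real.sqrt α / Real.exp 1)) -
          Real.log (α * (1 - b * Real.sqrt α / Real.exp 1)) -
          Real.log (1 - 2 * α + α * (1 - b * Real.sqrt α / Real.exp 1)))
      (nhdsWithin 0 (Set.Ioi 0)) (nhds (2 * Real.log b)) ∧
    (b < 1 → ∃ α₀ > 0, ∀ α : ℝ, 0 < α → α < α₀ →
      ((2 * Real.log (1 / α) + 2 - ε α) / α) *
          (α * (1 - b * Real.sqrt α / Real.exp 1) - α ^ 2) / (1 - α) ^ 4 +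
        2 * Real.log (α - α * (1 - b * Real.sqrt α / Real.exp 1)) -
        Real.log (α * (1 - b * Real.sqrt α / Real.exp 1)) -
        Real.log (1 - 2 * α + α * (1 - b * Real.sqrt α / Real.exp 1)) < 0) ∧
    (1 < b → ∃ α₀ > 0, ∀ α : ℝ, 0 < α → α < α₀ →
      0 < ((2 * Real.log (1 / α) + 2 - ε α) / α) *
          (α * (1 - b * Real.sqrt α / Real.exp 1) - α ^ 2) / (1 - α) ^ 4 +
        2 * Real.log (α - α * (1 - b * Real.sqrt α / Real.exp 1)) -
        Real.log (α * (1 - b * Real.sqrt α / Real.exp 1)) -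
        Real.log (1 - 2 * α + α * (1 - b * Real.sqrt α / Real.exp 1))) := by
  have hlim := psi_limit b hb ε hε
  refine ⟨hlim, ?_, ?_⟩
  · intro hblt
    have hneg : 2 * Real.log b < 0 := by
      have := Real.log_neg hb hblt
      linarith
    have hev := hlim.eventually (eventually_lt_nhds hneg)
    rw [eventually_nhdsWithin_iff, Metric.eventually_nhds_iff] at hev
    obtain ⟨δ, hδ, h⟩ := hev
    refine ⟨δ, hδ, fun α h0 hαδ => h ?_ h0⟩
    rw [Real.dist_eq, sub_zero, abs_of_pos h0]
    exact hαδ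
  · intro hbgt
    have hpos : 0 < 2 * Real.log b := by
      have := Real.log_pos hbgt
      linarith
    have hev := hlim.eventually (eventually_gt_nhds hpos)
    rw [eventually_nhdsWithin_iff, Metric.eventually_nhds_iff] at hev
    obtain ⟨δ, hδ, h⟩ := hev
    refine ⟨δ, hδ, fun α h0 hαδ => h ?_ h0⟩
    rw [Real.dist_eq, sub_zero, abs_of_pos h0]
    exact hαδ
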